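/- arXiv:1010.0624 — 4 statements merged into one kernel-verified Lean document; each statement's English description precedes it below -/
import Mathlib

section
/- Suppose f ∈ L¹([-π,π]) is a probability density that is symmetric about 0 (f(-x) = f(x)), convex on (0,π], and decreasing on (0,π]. Then all Fourier coefficients of f are nonnegative: for every integer m, ∫_{-π}^{π} f(x) cos(mx) dx ≥ 0. -/
open Real MeasureTheory Set intervalIntegral

lemma alt_sum_nonneg : ∀ (n : ℕ) (D : ℕ → ℝ), (∀ j, j + 1 < n → D (j + 1) ≤ D j) →
    (∀ j, j < n → 0 ≤ D j) → 0 ≤ ∑ j ∈ Finset.range n, (-1 : ℝ) ^ j * D j := by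
  intro n
  induction n using Nat.strong_induction_on with
  | _ n ih =>
    match n with
    | 0 => intro D _ _; simp
    | 1 => intro D _ hpos; simpa using hpos 0 (by norm_num)
    | (k + 2) =>
      intro D hadj hpos
      rw [Finset.sum_range_succ', Finset.sum_range_succ']
      have e : ∀ j ∈ Finset.range k,
          (-1 : ℝ) ^ (j + 1 + 1) * D (j + 1 + 1) = (-1) ^ j * D (j + 2) := by
        intro j _
        rw [pow_succ, pow_succ]; ring_nf
      rw [Finset.sum_congr rfl e]
      have key := ih k (by omega) (fun j => D (j + 2))
        (fun j hj => hadj (j + 2) (by omega)) (fun j hj => hpos (j + 2) (by omega))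
      have h01 := hadj 0 (by omega)
      simp only [pow_zero, pow_one, one_mul, neg_one_mul, zero_add] at *
      linarith

lemma convex_pair {g : ℝ → ℝ} {s : Set ℝ} (hconv : ConvexOn ℝ s g)
    {x y d : ℝ} (hd : 0 ≤ d) (hxy : x ≤ y) (hx : x ∈ s) (hyd : y + d ∈ s) :
    g (x + d) + g y ≤ g x + g (y + d) := by
  rcases eq_or_lt_of_le (show x ≤ y + d by linarith) with h | h
  · have hd0 : d = 0 := by linarith
    have hxy0 : x = y := by linarith
    simp [hd0, hxy0]
  · set t := d / (y + d - x) with ht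
    have hL : (0:ℝ) < y + d - x := by linarith
    have tmul : t * (y + d - x) = d := div_mul_cancel₀ _ hL.ne'
    have ht0 : 0 ≤ t := div_nonneg hd hL.le
    have ht1 : t ≤ 1 := by rw [ht, div_le_one hL]; linarith
    have e1 : (1 - t) • x + t • (y + d) = x + d := by
      simp only [smul_eq_mul]; linear_combination tmul
    have e2 : t • x + (1 - t) • (y + d) = y := by
      simp only [smul_eq_mul]; linear_combination -tmul
    have h1 := hconv.2 hx hyd (by linarith : (0:ℝ) ≤ 1 - t) ht0 (by ring)
    have h2 := hconv.2 hx hyd ht0 (by linarith : (0:ℝ) ≤ 1 - t) (by ring)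
    rw [e1] at h1; rw [e2] at h2
    simp only [smul_eq_mul] at h1 h2
    linarith

lemma II_shift {g : ℝ → ℝ} {A B c u v : ℝ} (h : IntervalIntegrable g volume A B)
    (hu : u + c = A) (hv : v + c = B) :
    IntervalIntegrable (fun x => g (x + c)) volume u v := by
  have := h.comp_add_right c
  rwa [show A - c = u by linarith, show B - c = v by linarith] at this

lemma II_resub {g : ℝ → ℝ} {A B c u v : ℝ} (h : IntervalIntegrable g volume A B)
    (hu : c - u = A) (hv : c - v = B) :
    IntervalIntegrable (fun x => g (c - x)) volume u v := by
  have := h.comp_sub_left c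
  rwa [show c - A = u by linarith, show c - B = v by linarith] at this

lemma key_lemma (g : ℝ → ℝ) (n : ℕ) (hn : 1 ≤ n)
    (hg : IntervalIntegrable g volume 0 (n * π))
    (hconv : ConvexOn ℝ (Ioc 0 (n * π)) g)
    (hdec : AntitoneOn g (Ioc 0 (n * π))) :
    0 ≤ ∫ t in (0:ℝ)..(n * π), g t * Real.cos t := by
  have pi_pos := Real.pi_pos
  have hn' : (1:ℝ) ≤ n := by exact_mod_cast hn
  have hpiece : ∀ a b : ℝ, 0 ≤ a → b ≤ n * π → a ≤ b → IntervalIntegrable g volume a b := by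
    intro a b ha hb hab
    apply hg.mono_set
    rw [uIcc_of_le hab, uIcc_of_le (by nlinarith : (0:ℝ) ≤ n * π)]
    exact Icc_subset_Icc ha hb
  have hAint : ∀ j : ℕ, j < n → IntervalIntegrable (fun s => g (s + j * π)) volume 0 (π / 2) := by
    intro j hj
    have hjn : (j:ℝ) + 1 ≤ n := by exact_mod_cast hj
    exact II_shift (hpiece ((j:ℝ) * π) ((j:ℝ) * π + π / 2) (by positivity) (by nlinarith)
      (by nlinarith)) (by ring) (by ring)
  have hBint : ∀ j : ℕ, j < n →
      IntervalIntegrable (fun s => g (((j:ℝ) + 1) * π - s)) volume 0 (π / 2) := by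
    intro j hj
    have hjn : (j:ℝ) + 1 ≤ n := by exact_mod_cast hj
    exact II_resub (hpiece (((j:ℝ) + 1) * π - π / 2) (((j:ℝ) + 1) * π) (by nlinarith)
      (by nlinarith) (by nlinarith)).symm (by ring) (by ring)
  have step : ∀ j : ℕ, j < n →
      (∫ t in ((j:ℝ) * π)..(((j:ℝ) + 1) * π), g t * Real.cos t)
        = ∫ s in (0:ℝ)..(π / 2),
            (-1 : ℝ) ^ j * ((g (s + j * π) - g (((j:ℝ) + 1) * π - s)) * Real.cos s) := by
    intro j hj
    have hjn : (j:ℝ) + 1 ≤ n := by exact_mod_cast hj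
    have e1 : (∫ s in (0:ℝ)..π, g (s + j * π) * Real.cos (s + j * π))
        = ∫ t in ((j:ℝ) * π)..(((j:ℝ) + 1) * π), g t * Real.cos t := by
      rw [integral_comp_add_right (fun t => g t * Real.cos t) ((j:ℝ) * π)]
      norm_num; ring_nf
    rw [← e1]
    have e2 : ∀ s : ℝ, g (s + j * π) * Real.cos (s + j * π)
        = (-1:ℝ) ^ j * (g (s + j * π) * Real.cos s) := by
      intro s; rw [Real.cos_add_nat_mul_pi]; ring
    simp_rw [e2]
    rw [intervalIntegral.integral_const_mul]
    have hI1 : IntervalIntegrable (fun s => g (s + j * π) * Real.cos s) volume 0 (π / 2) :=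
      (hAint j hj).mul_continuousOn Real.continuous_cos.continuousOn
    have hI2 : IntervalIntegrable (fun s => g (s + j * π) * Real.cos s) volume (π / 2) π := by
      exact (II_shift (hpiece ((j:ℝ) * π + π / 2) (((j:ℝ) + 1) * π) (by nlinarith) (by nlinarith)
        (by nlinarith)) (by ring) (by ring)).mul_continuousOn Real.continuous_cos.continuousOn
    rw [← integral_add_adjacent_intervals hI1 hI2]
    have e3 : (∫ s in (π/2:ℝ)..π, g (s + j * π) * Real.cos s)
        = ∫ s in (0:ℝ)..(π/2), g (((j:ℝ) + 1) * π - s) * (- Real.cos s) := by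
      have := integral_comp_sub_left (fun s => g (s + j * π) * Real.cos s) π (a := 0) (b := π/2)
      rw [show π - π / 2 = π / 2 by ring, sub_zero] at this
      rw [← this]
      congr 1; funext s
      rw [Real.cos_pi_sub]
      ring_nf
    rw [e3]
    have e4 : ∀ s : ℝ, g (((j:ℝ) + 1) * π - s) * (- Real.cos s)
        = -(g (((j:ℝ) + 1) * π - s) * Real.cos s) := fun s => by ring
    simp_rw [e4]
    rw [intervalIntegral.integral_neg, ← sub_eq_add_neg,
      ← intervalIntegral.integral_sub hI1
        ((hBint j hj).mul_continuousOn Real.continuous_cos.continuousOn),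
      ← intervalIntegral.integral_const_mul]
    congr 1; funext s; ring
  have hsplit : (∫ t in (0:ℝ)..(n * π), g t * Real.cos t)
      = ∑ j ∈ Finset.range n, ∫ t in ((j:ℝ) * π)..(((j:ℝ) + 1) * π), g t * Real.cos t := by
    have hadj : ∀ k < n, IntervalIntegrable (fun t => g t * Real.cos t) volume
        ((fun j : ℕ => (j:ℝ) * π) k) ((fun j : ℕ => (j:ℝ) * π) (k + 1)) := by
      intro k hk
      have hkn : (k:ℝ) + 1 ≤ n := by exact_mod_cast hk
      refine (hpiece ((k:ℝ) * π) (((k:ℝ) + 1) * π) (by positivity) (by nlinarith) (by nlinarith)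
        ).mul_continuousOn Real.continuous_cos.continuousOn |>.mono_set ?_
      simp only [Nat.cast_add, Nat.cast_one]
      exact subset_rfl
    have := intervalIntegral.sum_integral_adjacent_intervals (μ := volume)
      (f := fun t => g t * Real.cos t) hadj
    simp only [Nat.cast_zero, zero_mul] at this
    rw [← this]
    apply Finset.sum_congr rfl
    intro j _
    congr 1
    push_cast
    ring
  rw [hsplit]
  have hrw : ∀ j ∈ Finset.range n,
      (∫ t in ((j:ℝ) * π)..(((j:ℝ) + 1) * π), g t * Real.cos t)
        = ∫ s in (0:ℝ)..(π / 2),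
            (-1 : ℝ) ^ j * ((g (s + j * π) - g (((j:ℝ) + 1) * π - s)) * Real.cos s) :=
    fun j hj => step j (Finset.mem_range.mp hj)
  rw [Finset.sum_congr rfl hrw]
  rw [← intervalIntegral.integral_finset_sum]
  · apply intervalIntegral.integral_nonneg_of_ae_restrict (by linarith)
    rw [← Measure.restrict_congr_set Ioc_ae_eq_Icc]
    rw [Filter.EventuallyLE, ae_restrict_iff' measurableSet_Ioc]
    filter_upwards with s hs
    obtain ⟨hs0, hs2⟩ := hs
    have hcos : 0 ≤ Real.cos s :=
      Real.cos_nonneg_of_mem_Icc ⟨by linarith, by linarith⟩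
    have key := alt_sum_nonneg n (fun j => g (s + j * π) - g (((j:ℝ) + 1) * π - s)) ?_ ?_
    · calc (0:ℝ) ≤ (∑ j ∈ Finset.range n,
            (-1 : ℝ) ^ j * (g (s + j * π) - g (((j:ℝ) + 1) * π - s))) * Real.cos s :=
          mul_nonneg key hcos
        _ = ∑ j ∈ Finset.range n,
            (-1 : ℝ) ^ j * ((g (s + j * π) - g (((j:ℝ) + 1) * π - s)) * Real.cos s) := by
          rw [Finset.sum_mul]; apply Finset.sum_congr rfl; intro j _; ring
    · intro j hj
      have hjn : (j:ℝ) + 2 ≤ n := by exact_mod_cast hj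
      have h := convex_pair hconv (x := s + j * π) (y := s + ((j:ℝ) + 1) * π)
        (d := π - 2 * s) (by linarith) (by nlinarith)
        ⟨by positivity, by nlinarith⟩
        (by constructor
            · nlinarith
            · nlinarith)
      rw [show s + (j:ℝ) * π + (π - 2 * s) = ((j:ℝ) + 1) * π - s by ring,
        show s + ((j:ℝ) + 1) * π + (π - 2 * s) = ((j:ℝ) + 1 + 1) * π - s by ring] at h
      push_cast
      linarith
    · intro j hj
      have hjn : (j:ℝ) + 1 ≤ n := by exact_mod_cast hj
      have := hdec (a := s + j * π) (b := ((j:ℝ) + 1) * π - s)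
        ⟨by positivity, by nlinarith⟩ ⟨by nlinarith, by nlinarith⟩ (by nlinarith)
      linarith
  · intro j hj
    exact (((hAint j (Finset.mem_range.mp hj)).sub
      (hBint j (Finset.mem_range.mp hj))).mul_continuousOn
      Real.continuous_cos.continuousOn).const_mul _

theorem fourier_coeffs_nonneg_of_symmetric_convex_decreasing
    (f : ℝ → ℝ)
    (hint : IntegrableOn f (Icc (-π) π))
    (hprob : ∫ x in Icc (-π) π, f x = 1)
    (heven : ∀ x, f (-x) = f x)
    (hconv : ConvexOn ℝ (Ioc 0 π) f)
    (hdec : AntitoneOn f (Ioc 0 π)) :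
    ∀ m : ℤ, 0 ≤ ∫ x in Icc (-π) π, f x * Real.cos (m * x) := by
  intro m
  have pi_pos := Real.pi_pos
  rcases eq_or_ne m 0 with rfl | hm
  · simp only [Int.cast_zero, zero_mul, Real.cos_zero, mul_one]
    rw [hprob]; norm_num
  set k := m.natAbs with hkdef
  have hk1 : 1 ≤ k := Int.natAbs_pos.mpr hm
  have hkR : (1:ℝ) ≤ (k:ℝ) := by exact_mod_cast hk1
  have hkpos : (0:ℝ) < (k:ℝ) := by linarith
  have hcos : ∀ x : ℝ, Real.cos ((m:ℝ) * x) = Real.cos ((k:ℝ) * x) := by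
    intro x
    rcases Int.natAbs_eq m with h | h
    · rw [h, Int.cast_natCast]
    · rw [h, Int.cast_neg, Int.cast_natCast,
        show -(k:ℝ) * x = -((k:ℝ) * x) by ring, Real.cos_neg]
  simp_rw [hcos]
  rw [MeasureTheory.integral_Icc_eq_integral_Ioc,
    ← intervalIntegral.integral_of_le (by linarith : -π ≤ π)]
  have hfi : IntervalIntegrable f volume (-π) π :=
    (intervalIntegrable_iff_integrableOn_Icc_of_le (by linarith)).mpr hint
  have hcont : Continuous fun x : ℝ => Real.cos ((k:ℝ) * x) :=
    Real.continuous_cos.comp (continuous_const.mul continuous_id)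
  have hsub1 : uIcc (-π) (0:ℝ) ⊆ uIcc (-π) π := by
    rw [uIcc_of_le (by linarith : -π ≤ (0:ℝ)), uIcc_of_le (by linarith : -π ≤ π)]
    exact Icc_subset_Icc le_rfl (by linarith)
  have hsub2 : uIcc (0:ℝ) π ⊆ uIcc (-π) π := by
    rw [uIcc_of_le (by linarith : (0:ℝ) ≤ π), uIcc_of_le (by linarith : -π ≤ π)]
    exact Icc_subset_Icc (by linarith) le_rfl
  have hFneg : IntervalIntegrable (fun x => f x * Real.cos ((k:ℝ) * x)) volume (-π) 0 :=
    (hfi.mono_set hsub1).mul_continuousOn hcont.continuousOn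
  have hFpos : IntervalIntegrable (fun x => f x * Real.cos ((k:ℝ) * x)) volume 0 π :=
    (hfi.mono_set hsub2).mul_continuousOn hcont.continuousOn
  rw [← integral_add_adjacent_intervals hFneg hFpos]
  have hfold : (∫ x in (-π)..(0:ℝ), f x * Real.cos ((k:ℝ) * x))
      = ∫ x in (0:ℝ)..π, f x * Real.cos ((k:ℝ) * x) := by
    have h := integral_comp_neg (fun x => f x * Real.cos ((k:ℝ) * x)) (a := 0) (b := π)
    rw [neg_zero] at h
    rw [← h]
    congr 1; funext x
    rw [heven, show (k:ℝ) * -x = -((k:ℝ) * x) by ring, Real.cos_neg]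
  rw [hfold]
  have main : 0 ≤ ∫ x in (0:ℝ)..π, f x * Real.cos ((k:ℝ) * x) := by
    have hk0 : (k:ℝ) ≠ 0 := hkpos.ne'
    -- substitution
    have hsub := integral_comp_div (a := (0:ℝ)) (b := (k:ℝ) * π)
      (fun u => f u * Real.cos ((k:ℝ) * u)) hk0
    rw [zero_div, mul_div_cancel_left₀ _ hk0] at hsub
    have hinteg : ∀ t : ℝ, f (t / k) * Real.cos ((k:ℝ) * (t / k)) = f (t / k) * Real.cos t := by
      intro t
      congr 2
      field_simp
    simp_rw [hinteg] at hsub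
    -- apply key lemma to g = fun t => f (t / k)
    have hg : IntervalIntegrable (fun t => f (t / ((k:ℝ))) ) volume 0 ((k:ℝ) * π) := by
      have h0 : IntervalIntegrable f volume 0 π := hfi.mono_set hsub2
      have := h0.comp_mul_right (c := (k:ℝ)⁻¹)
      simp_rw [div_eq_mul_inv]
      rw [show (0:ℝ) / (k:ℝ)⁻¹ = 0 by simp,
        show π / (k:ℝ)⁻¹ = (k:ℝ) * π by field_simp] at this
      exact this
    have hconvg : ConvexOn ℝ (Ioc 0 ((k:ℝ) * π)) (fun t => f (t / (k:ℝ))) := by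
      refine ⟨convex_Ioc _ _, ?_⟩
      intro x hx y hy a b ha hb hab
      simp only [smul_eq_mul]
      have hxk : x / (k:ℝ) ∈ Ioc 0 π :=
        ⟨div_pos hx.1 hkpos, by rw [div_le_iff₀ hkpos]; nlinarith [hx.2]⟩
      have hyk : y / (k:ℝ) ∈ Ioc 0 π :=
        ⟨div_pos hy.1 hkpos, by rw [div_le_iff₀ hkpos]; nlinarith [hy.2]⟩
      have h2 := hconv.2 hxk hyk ha hb hab
      simp only [smul_eq_mul] at h2
      calc f ((a * x + b * y) / k) = f (a * (x / k) + b * (y / k)) := by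
            rw [add_div, mul_div_assoc, mul_div_assoc]
        _ ≤ a * f (x / k) + b * f (y / k) := h2
    have hdecg : AntitoneOn (fun t => f (t / (k:ℝ))) (Ioc 0 ((k:ℝ) * π)) := by
      intro x hx y hy hxy
      have hxk : x / (k:ℝ) ∈ Ioc 0 π :=
        ⟨div_pos hx.1 hkpos, by rw [div_le_iff₀ hkpos]; nlinarith [hx.2]⟩
      have hyk : y / (k:ℝ) ∈ Ioc 0 π :=
        ⟨div_pos hy.1 hkpos, by rw [div_le_iff₀ hkpos]; nlinarith [hy.2]⟩
      exact hdec hxk hyk ((div_le_div_iff_of_pos_right hkpos).mpr hxy)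
    have hkey := key_lemma (fun t => f (t / (k:ℝ))) k hk1 hg hconvg hdecg
    rw [hsub] at hkey
    rw [smul_eq_mul] at hkey
    nlinarith [hkey]
  linarith
end

section
/- The Fourier cosine coefficients of f(x) = (1/(2π)) log(π/|x|) are given by (1/π) ∫_0^π log(π/x) cos(mx) dx = Si(mπ)/(mπ) for every integer m ≥ 1, where Si(t) = ∫_0^t (sin x)/x dx is the sine integral. -/
open Real MeasureTheory Set intervalIntegral Filter Topology Interval

lemma my_intervalIntegrable_log_pi : IntervalIntegrable Real.log volume 0 π := by
  have hg : IntervalIntegrable (fun x : ℝ => 2 * x ^ (-(1/2) : ℝ) + Real.log π)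
      volume 0 π :=
    ((intervalIntegrable_rpow' (by norm_num)).const_mul 2).add intervalIntegrable_const
  refine hg.mono_fun' Real.measurable_log.aestronglyMeasurable ?_
  rw [uIoc_of_le Real.pi_pos.le]
  filter_upwards [ae_restrict_mem measurableSet_Ioc] with x hx
  have hx0 : 0 < x := hx.1
  have hrp : 0 < x ^ (-(1/2) : ℝ) := Real.rpow_pos_of_pos hx0 _
  have hlπ : 0 ≤ Real.log π := Real.log_nonneg (by linarith [Real.pi_gt_three])
  simp only [Real.norm_eq_abs]
  rcases le_or_gt x 1 with hx1 | hx1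
  · have h2 := Real.abs_log_mul_self_rpow_lt x (1/2) hx0 hx1 (by norm_num)
    have hxr : (0:ℝ) < x ^ ((1:ℝ)/2) := Real.rpow_pos_of_pos hx0 _
    have key : |Real.log x| ≤ 2 * x ^ (-(1/2) : ℝ) := by
      rw [abs_mul, abs_of_pos hxr] at h2
      have h3 : |Real.log x| * x ^ ((1:ℝ)/2) ≤ 2 := by norm_num at h2; linarith
      have hinv : x ^ (-(1/2) : ℝ) = (x ^ ((1:ℝ)/2))⁻¹ := by
        rw [← Real.rpow_neg hx0.le]
      rw [hinv]
      calc |Real.log x| = |Real.log x| * x ^ ((1:ℝ)/2) * (x ^ ((1:ℝ)/2))⁻¹ := by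
            field_simp
        _ ≤ 2 * (x ^ ((1:ℝ)/2))⁻¹ :=
            mul_le_mul_of_nonneg_right h3 (by positivity)
    linarith
  · have : |Real.log x| = Real.log x := abs_of_nonneg (Real.log_nonneg hx1.le)
    have : |Real.log x| ≤ Real.log π := by
      rw [this]; exact Real.log_le_log hx0 hx.2
    linarith

theorem fourier_coeff_log_density_eq_sine_integral (m : ℕ) (hm : 1 ≤ m) :
    (1 / π) * ∫ x in (0:ℝ)..π, Real.log (π / x) * Real.cos (m * x) =
      (∫ x in (0:ℝ)..(m * π), Real.sin x / x) / (m * π) := by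
  set M : ℝ := (m : ℝ) with hMdef
  have hM : 0 < M := by rw [hMdef]; exact_mod_cast hm
  set f : ℝ → ℝ := fun x => Real.log (π / x) * Real.cos (M * x) with hf_def
  set h : ℝ → ℝ := fun x => Real.sin (M * x) / (M * x) with hh_def
  -- integrability of f on [0, π]
  have hf : IntervalIntegrable f volume 0 π := by
    have h1 : IntervalIntegrable (fun x : ℝ => Real.log π - Real.log x) volume 0 π :=
      intervalIntegrable_const.sub my_intervalIntegrable_log_pi
    have h2 : IntervalIntegrable (fun x : ℝ => (Real.log π - Real.log x) * Real.cos (M * x))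
        volume 0 π :=
      h1.mul_continuousOn (Continuous.continuousOn (by continuity))
    apply h2.congr
    rw [uIoc_of_le Real.pi_pos.le]
    intro x hx
    rw [hf_def]
    simp only
    rw [Real.log_div Real.pi_ne_zero hx.1.ne']
  -- integrability of h on [0, π]
  have hh : IntervalIntegrable h volume 0 π := by
    have hg : IntervalIntegrable (fun _ : ℝ => (1:ℝ)) volume 0 π := intervalIntegrable_const
    refine hg.mono_fun' ?_ ?_
    · exact (Real.measurable_sin.comp (measurable_const_mul M)).div
        ((measurable_const_mul M)) |>.aestronglyMeasurable
    · refine Eventually.of_forall fun x => ?_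
      simp only [Real.norm_eq_abs, hh_def]
      rcases eq_or_ne (M * x) 0 with h0 | h0
      · simp [h0]
      · rw [abs_div, div_le_one (abs_pos.mpr h0)]
        exact Real.abs_sin_le_abs
  -- key identity for ε ∈ (0, π)
  have key : ∀ ε : ℝ, ε ∈ Ioo 0 π →
      ∫ x in ε..π, f x =
        -(Real.log (π / ε) * Real.sin (M * ε) / M) + ∫ x in ε..π, h x := by
    intro ε hε
    have hεπ : ε ≤ π := hε.2.le
    have hsub : [[ε, π]] ⊆ [[0, π]] := by
      rw [uIcc_of_le hεπ, uIcc_of_le Real.pi_pos.le]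
      exact Icc_subset_Icc hε.1.le le_rfl
    have hpos : ∀ x ∈ [[ε, π]], 0 < x := by
      intro x hx
      rw [uIcc_of_le hεπ] at hx
      exact lt_of_lt_of_le hε.1 hx.1
    set G : ℝ → ℝ := fun x => Real.log (π / x) * Real.sin (M * x) / M with hG_def
    have hderiv : ∀ x ∈ [[ε, π]], HasDerivAt G (f x - h x) x := by
      intro x hx
      have hx0 : 0 < x := hpos x hx
      have hlog : HasDerivAt (fun y : ℝ => Real.log (π / y)) (-x⁻¹) x := by
        have h1 : HasDerivAt (fun y : ℝ => Real.log π - Real.log y) (-x⁻¹) x := by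
          simpa using (Real.hasDerivAt_log hx0.ne').const_sub (Real.log π)
        apply h1.congr_of_eventuallyEq
        filter_upwards [eventually_gt_nhds hx0] with y hy
        rw [Real.log_div Real.pi_ne_zero hy.ne']
      have hsin : HasDerivAt (fun y : ℝ => Real.sin (M * y)) (Real.cos (M * x) * (M * 1)) x :=
        HasDerivAt.sin ((hasDerivAt_id x).const_mul M)
      have hG : HasDerivAt G
          ((-x⁻¹ * Real.sin (M * x) + Real.log (π / x) * (Real.cos (M * x) * (M * 1))) / M) x :=
        (hlog.mul hsin).div_const M
      convert hG using 1
      rw [hf_def, hh_def]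
      simp only
      rw [Real.log_div Real.pi_ne_zero hx0.ne']
      field_simp
      ring
    have hfε : IntervalIntegrable f volume ε π := hf.mono_set hsub
    have hhε : IntervalIntegrable h volume ε π := hh.mono_set hsub
    have heq := intervalIntegral.integral_eq_sub_of_hasDerivAt hderiv (hfε.sub hhε)
    rw [intervalIntegral.integral_sub hfε hhε] at heq
    have hGπ : G π = 0 := by
      rw [hG_def]; simp only []; rw [div_self Real.pi_ne_zero, Real.log_one, zero_mul, zero_div]
    rw [hGπ] at heq
    rw [hG_def] at heq
    simp only at heq
    linarith
  -- integrable versions on uIcc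
  have hIf : IntegrableOn f (uIcc 0 π) volume := by
    rw [uIcc_of_le Real.pi_pos.le, integrableOn_Icc_iff_integrableOn_Ioc]
    exact (intervalIntegrable_iff_integrableOn_Ioc_of_le Real.pi_pos.le).mp hf
  have hIh : IntegrableOn h (uIcc 0 π) volume := by
    rw [uIcc_of_le Real.pi_pos.le, integrableOn_Icc_iff_integrableOn_Ioc]
    exact (intervalIntegrable_iff_integrableOn_Ioc_of_le Real.pi_pos.le).mp hh
  have hnhds : 𝓝[>] (0:ℝ) ≤ 𝓝[uIcc 0 π] (0:ℝ) := by
    rw [uIcc_of_le Real.pi_pos.le, ← nhdsWithin_Ioc_eq_nhdsGT Real.pi_pos]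
    exact nhdsWithin_mono 0 Ioc_subset_Icc_self
  have hA : Tendsto (fun ε => ∫ x in ε..π, f x) (𝓝[>] (0:ℝ))
      (𝓝 (∫ x in (0:ℝ)..π, f x)) :=
    ((intervalIntegral.continuousOn_primitive_interval_left hIf 0
      left_mem_uIcc).tendsto).mono_left hnhds
  have hB : Tendsto (fun ε => ∫ x in ε..π, h x) (𝓝[>] (0:ℝ))
      (𝓝 (∫ x in (0:ℝ)..π, h x)) :=
    ((intervalIntegral.continuousOn_primitive_interval_left hIh 0
      left_mem_uIcc).tendsto).mono_left hnhds
  have hC : Tendsto (fun ε => Real.log (π / ε) * Real.sin (M * ε) / M)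
      (𝓝[>] (0:ℝ)) (𝓝 0) := by
    apply squeeze_zero_norm' (a := fun ε => ε * Real.log π - Real.log ε * ε)
    · filter_upwards [Ioo_mem_nhdsGT Real.pi_pos] with ε hε
      have hε0 : 0 < ε := hε.1
      have l1 : 0 ≤ Real.log (π / ε) :=
        Real.log_nonneg ((one_le_div hε0).mpr hε.2.le)
      have l2 : |Real.sin (M * ε)| ≤ M * ε := by
        refine Real.abs_sin_le_abs.trans ?_
        rw [abs_of_nonneg (by positivity)]
      rw [Real.norm_eq_abs, abs_div, abs_mul, abs_of_nonneg l1, abs_of_pos hM]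
      have step : Real.log (π / ε) * |Real.sin (M * ε)| / M
          ≤ Real.log (π / ε) * (M * ε) / M := by gcongr
      refine step.trans (le_of_eq ?_)
      rw [Real.log_div Real.pi_ne_zero hε0.ne']
      have hMne : M ≠ 0 := hM.ne'
      field_simp
    · have t1 : Tendsto (fun ε : ℝ => ε * Real.log π) (𝓝[>] (0:ℝ)) (𝓝 0) := by
        have : Tendsto (fun ε : ℝ => ε * Real.log π) (𝓝 (0:ℝ)) (𝓝 (0 * Real.log π)) :=
          (continuous_id.mul continuous_const).tendsto 0
        rw [zero_mul] at this
        exact this.mono_left nhdsWithin_le_nhds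
      have t2 : Tendsto (fun ε : ℝ => Real.log ε * ε) (𝓝[>] (0:ℝ)) (𝓝 0) := by
        have := tendsto_log_mul_rpow_nhdsGT_zero zero_lt_one
        simpa using this
      simpa using t1.sub t2
  have hEq : (fun ε => ∫ x in ε..π, f x) =ᶠ[𝓝[>] (0:ℝ)]
      fun ε => -(Real.log (π / ε) * Real.sin (M * ε) / M) + ∫ x in ε..π, h x := by
    filter_upwards [Ioo_mem_nhdsGT Real.pi_pos] with ε hε
    exact key ε hε
  have hlim2 : Tendsto (fun ε => -(Real.log (π / ε) * Real.sin (M * ε) / M)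
      + ∫ x in ε..π, h x) (𝓝[>] (0:ℝ)) (𝓝 (∫ x in (0:ℝ)..π, h x)) := by
    have := hC.neg.add hB
    rw [neg_zero, zero_add] at this
    exact this
  have hfh : (∫ x in (0:ℝ)..π, f x) = ∫ x in (0:ℝ)..π, h x :=
    tendsto_nhds_unique hA (hlim2.congr' hEq.symm)
  have hsubst : (∫ x in (0:ℝ)..π, h x)
      = M⁻¹ * ∫ x in (0:ℝ)..(M * π), Real.sin x / x := by
    have := intervalIntegral.integral_comp_mul_left (a := (0:ℝ)) (b := π)
      (fun u => Real.sin u / u) hM.ne'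
    simpa [hh_def, mul_zero, smul_eq_mul] using this
  rw [hfh, hsubst]
  have h1 : M ≠ 0 := hM.ne'
  have h2 : (π:ℝ) ≠ 0 := Real.pi_ne_zero
  field_simp
end

section
/- The sine integral is positive: Si(t) = ∫_0^t (sin x)/x dx > 0 for all t > 0. -/
open Real MeasureTheory intervalIntegral

lemma sinc_ii (a b : ℝ) : IntervalIntegrable (fun x => Real.sin x / x) volume a b := by
  rw [intervalIntegrable_iff]
  apply MeasureTheory.Integrable.mono' (g := fun _ => (1:ℝ))
    (integrableOn_const measure_Ioc_lt_top.ne)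
  · exact (Real.measurable_sin.div measurable_id).aestronglyMeasurable.restrict
  · filter_upwards with x
    rcases eq_or_ne x 0 with h | h
    · simp [h]
    · rw [Real.norm_eq_abs, abs_div]
      exact div_le_one_of_le₀ Real.abs_sin_le_abs (abs_nonneg x)

lemma sinc_nonneg {x : ℝ} (n : ℕ) (h1 : (n : ℝ) * (2 * π) ≤ x)
    (h2 : x ≤ (n : ℝ) * (2 * π) + π) : 0 ≤ Real.sin x / x := by
  have hπ := Real.pi_pos
  have ha : (0:ℝ) ≤ (n : ℝ) * (2 * π) := by positivity
  have hx : 0 ≤ x := le_trans ha h1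
  have hs : Real.sin x = Real.sin (x - n * (2 * π)) := by
    rw [← Real.sin_add_nat_mul_two_pi (x - n * (2 * π)) n]; ring_nf
  apply div_nonneg _ hx
  rw [hs]
  exact Real.sin_nonneg_of_nonneg_of_le_pi (by linarith) (by linarith)

lemma sinc_pos {x : ℝ} (n : ℕ) (h1 : (n : ℝ) * (2 * π) < x)
    (h2 : x < (n : ℝ) * (2 * π) + π) : 0 < Real.sin x / x := by
  have hπ := Real.pi_pos
  have ha : (0:ℝ) ≤ (n : ℝ) * (2 * π) := by positivity
  have hx : 0 < x := lt_of_le_of_lt ha h1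
  have hs : Real.sin x = Real.sin (x - n * (2 * π)) := by
    rw [← Real.sin_add_nat_mul_two_pi (x - n * (2 * π)) n]; ring_nf
  apply div_pos _ hx
  rw [hs]
  exact Real.sin_pos_of_pos_of_lt_pi (by linarith) (by linarith)

lemma arch_pos (n : ℕ) {s : ℝ} (hs : 0 < s) (hs2 : s ≤ 2 * π) :
    0 < ∫ x in ((n : ℝ) * (2 * π))..((n : ℝ) * (2 * π) + s), Real.sin x / x := by
  have hπ := Real.pi_pos
  set a : ℝ := (n : ℝ) * (2 * π) with ha_def
  have ha : (0:ℝ) ≤ a := by positivity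
  rcases le_or_gt s π with hsπ | hsπ
  · -- s ≤ π : integrand positive on (a, a+s)
    apply intervalIntegral_pos_of_pos_on (sinc_ii _ _)
    · intro x hx
      exact sinc_pos n hx.1 (by linarith [hx.2])
    · linarith
  · -- π < s ≤ 2π
    set b : ℝ := a + s - π with hb_def
    have hab : a < b := by simp [hb_def]; linarith
    have hbπ : b ≤ a + π := by simp [hb_def]; linarith
    -- split
    have hsplit : (∫ x in a..(a + s), Real.sin x / x)
        = (∫ x in a..(a + π), Real.sin x / x) + ∫ x in (a + π)..(a + s), Real.sin x / x :=
      (integral_add_adjacent_intervals (sinc_ii _ _) (sinc_ii _ _)).symm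
    have hshift : (∫ x in (a + π)..(a + s), Real.sin x / x)
        = ∫ x in a..b, Real.sin (x + π) / (x + π) := by
      rw [intervalIntegral.integral_comp_add_right (fun x => Real.sin x / x) π]
      congr 1; simp [hb_def]
    have hneg : (∫ x in a..b, Real.sin (x + π) / (x + π))
        = - ∫ x in a..b, Real.sin x / (x + π) := by
      rw [← intervalIntegral.integral_neg]
      congr 1; funext x; rw [Real.sin_add_pi]; ring
    have hii2 : IntervalIntegrable (fun x => Real.sin x / (x + π)) volume a b := by
      apply ContinuousOn.intervalIntegrable
      apply Real.continuous_sin.continuousOn.div (continuousOn_id.add continuousOn_const)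
      intro x hx
      rcases hx with ⟨hx1, _⟩
      rw [min_eq_left hab.le] at hx1
      simp only [Pi.add_apply, id]
      intro h; linarith
    have hsplit2 : (∫ x in a..(a + π), Real.sin x / x)
        = (∫ x in a..b, Real.sin x / x) + ∫ x in b..(a + π), Real.sin x / x :=
      (integral_add_adjacent_intervals (sinc_ii _ _) (sinc_ii _ _)).symm
    rw [hsplit, hshift, hneg, hsplit2]
    have key1 : 0 < (∫ x in a..b, Real.sin x / x) - ∫ x in a..b, Real.sin x / (x + π) := by
      rw [← intervalIntegral.integral_sub (sinc_ii _ _) hii2]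
      apply intervalIntegral_pos_of_pos_on ((sinc_ii _ _).sub hii2) _ hab
      intro x hx
      have hx0 : 0 < x := lt_of_le_of_lt ha hx.1
      have hsinpos : 0 < Real.sin x := by
        have hsx : Real.sin x = Real.sin (x - a) := by
          rw [← Real.sin_add_nat_mul_two_pi (x - a) n, ha_def]; ring_nf
        have hxb : x < b := hx.2
        rw [hsx]
        exact Real.sin_pos_of_pos_of_lt_pi (by linarith [hx.1])
          (by simp only [hb_def] at hxb; linarith)
      have : Real.sin x / (x + π) < Real.sin x / x :=
        div_lt_div_of_pos_left hsinpos hx0 (by linarith)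
      linarith
    have key2 : 0 ≤ ∫ x in b..(a + π), Real.sin x / x := by
      apply intervalIntegral.integral_nonneg hbπ
      intro x hx
      exact sinc_nonneg n (by linarith [hx.1, hab.le]) (by linarith [hx.2])
    linarith

theorem sine_integral_pos (t : ℝ) (ht : 0 < t) :
    0 < ∫ x in (0:ℝ)..t, Real.sin x / x := by
  have hπ := Real.pi_pos
  obtain ⟨n, hn⟩ := exists_nat_ge (t / (2 * π))
  have hn' : t ≤ ((n : ℝ) + 1) * (2 * π) := by
    rw [div_le_iff₀ (by linarith)] at hn
    nlinarith [Nat.cast_nonneg (α := ℝ) n]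
  clear hn
  induction n generalizing t with
  | zero =>
    norm_num at hn'
    have := arch_pos 0 ht hn'
    simpa using this
  | succ n ih =>
    rcases le_or_gt t (((n : ℝ) + 1) * (2 * π)) with h | h
    · exact ih t ht h
    · have ha : (0:ℝ) < ((n : ℝ) + 1) * (2 * π) := by positivity
      have h1 : 0 < ∫ x in (0:ℝ)..(((n : ℝ) + 1) * (2 * π)), Real.sin x / x :=
        ih _ ha le_rfl
      have h2 : 0 < ∫ x in (((n : ℝ) + 1) * (2 * π))..t, Real.sin x / x := by
        have := arch_pos (n + 1) (s := t - ((n : ℝ) + 1) * (2 * π)) (by linarith)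
          (by push_cast at hn' ⊢; nlinarith)
        have he : ((n + 1 : ℕ) : ℝ) * (2 * π) = ((n : ℝ) + 1) * (2 * π) := by push_cast; ring
        rw [he] at this
        convert this using 2
        ring
      have := integral_add_adjacent_intervals (a := (0:ℝ)) (b := ((n : ℝ) + 1) * (2 * π))
        (c := t) (sinc_ii _ _) (sinc_ii _ _)
      linarith [this ▸ add_pos h1 h2]
end

section
/- For every x ∈ [-π,π] and positive even N, the Dirichlet-type kernel satisfies the step-function bound |sin(N x / 2) / (N sin(x/2))| ≤ Σ_{k=1}^{N/2} (1/k) · 1_{[2π(k-1)/N, 2πk/N)}(|x|), where the right-hand side is the step function equal to 1/k on the annulus 2π(k-1)/N ≤ |x| < 2πk/N. -/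
open Real Set

lemma abs_sin_nat_mul_le (n : ℕ) (t : ℝ) :
    |Real.sin (n * t)| ≤ n * |Real.sin t| := by
  induction n with
  | zero => simp
  | succ n ih =>
      have : ((n : ℝ) + 1) * t = n * t + t := by ring
      push_cast
      rw [this, Real.sin_add]
      calc |Real.sin (n * t) * Real.cos t + Real.cos (n * t) * Real.sin t|
          ≤ |Real.sin (n * t) * Real.cos t| + |Real.cos (n * t) * Real.sin t| :=
            abs_add_le _ _
        _ ≤ |Real.sin (n * t)| * 1 + 1 * |Real.sin t| := by
            rw [abs_mul, abs_mul]
            gcongr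
            · exact Real.abs_cos_le_one t
            · exact Real.abs_cos_le_one _
        _ ≤ n * |Real.sin t| + 1 * |Real.sin t| := by
            rw [mul_one]; gcongr
        _ = ((n : ℝ) + 1) * |Real.sin t| := by ring

theorem dirichlet_kernel_step_function_bound (N : ℕ) (hN : 2 ≤ N)
    (hNeven : Even N) (x : ℝ) (hx : x ∈ Icc (-π) π) :
    |Real.sin (N * x / 2) / (N * Real.sin (x / 2))| ≤
      ∑ k ∈ Finset.Icc 1 (N / 2), (1 / (k : ℝ)) *
        (Set.Ico (2 * π * ((k : ℝ) - 1) / N) (2 * π * k / N)).indicator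
          (fun _ => (1 : ℝ)) |x| := by
  have hπ : (0 : ℝ) < π := Real.pi_pos
  have hN0 : (0 : ℝ) < N := by positivity
  have hxabs : |x| ≤ π := abs_le.2 ⟨hx.1, hx.2⟩
  obtain ⟨M, hM⟩ := hNeven
  have hMN : N = 2 * M := by omega
  have hM2 : N / 2 = M := by omega
  have hMR : (N : ℝ) = 2 * M := by rw [hMN]; push_cast; ring
  have hterm_nonneg : ∀ k ∈ Finset.Icc 1 (N / 2),
      0 ≤ (1 / (k : ℝ)) *
        (Set.Ico (2 * π * ((k : ℝ) - 1) / N) (2 * π * k / N)).indicator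
          (fun _ => (1 : ℝ)) |x| := by
    intro k _
    apply mul_nonneg (by positivity)
    exact Set.indicator_nonneg (fun _ _ => zero_le_one) _
  rcases eq_or_lt_of_le hxabs with heq | hlt
  · -- |x| = π : both sides are 0
    have hsin0 : Real.sin (N * x / 2) = 0 := by
      rcases abs_eq hπ.le |>.1 heq with hx1 | hx1
      · rw [hx1, hMR]
        have : (2 : ℝ) * M * π / 2 = (M : ℤ) * π := by push_cast; ring
        rw [this, Real.sin_int_mul_pi]
      · rw [hx1, hMR]
        have : (2 : ℝ) * M * (-π) / 2 = -(M : ℤ) * π := by push_cast; ring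
        rw [this]
        exact_mod_cast Real.sin_int_mul_pi (-(M : ℤ))
    rw [hsin0, zero_div, abs_zero]
    apply Finset.sum_nonneg hterm_nonneg
  · -- |x| < π
    set r : ℝ := N * |x| / (2 * π) with hr
    have hr0 : 0 ≤ r := by positivity
    set k0 : ℕ := ⌊r⌋₊ + 1 with hk0
    have hfl : (⌊r⌋₊ : ℝ) ≤ r := Nat.floor_le hr0
    have hfl2 : r < ⌊r⌋₊ + 1 := Nat.lt_floor_add_one r
    have hrM : r < M := by
      rw [hr, hMR]
      rw [div_lt_iff₀ (by positivity)]
      nlinarith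
    have hk0M : k0 ≤ M := by
      have : ⌊r⌋₊ < M := Nat.floor_lt hr0 |>.2 hrM
      omega
    have hmem : k0 ∈ Finset.Icc 1 (N / 2) := by
      rw [hM2]; exact Finset.mem_Icc.2 ⟨by omega, hk0M⟩
    have hxmem : |x| ∈ Set.Ico (2 * π * ((k0 : ℝ) - 1) / N) (2 * π * k0 / N) := by
      constructor
      · rw [div_le_iff₀ hN0]
        have : ((k0 : ℝ) - 1) = ⌊r⌋₊ := by rw [hk0]; push_cast; ring
        rw [this]
        have h1 : (⌊r⌋₊ : ℝ) * (2 * π) ≤ r * (2 * π) := by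
          apply mul_le_mul_of_nonneg_right hfl (by positivity)
        rw [hr] at h1
        rw [div_mul_cancel₀] at h1
        · linarith [h1]
        · positivity
      · rw [lt_div_iff₀ hN0]
        have h1 : r * (2 * π) < ((⌊r⌋₊ : ℝ) + 1) * (2 * π) := by
          apply mul_lt_mul_of_pos_right hfl2 (by positivity)
        rw [hr, div_mul_cancel₀] at h1
        · have : ((k0 : ℝ)) = (⌊r⌋₊ : ℝ) + 1 := by rw [hk0]; push_cast; ring
          rw [this]; linarith [h1]
        · positivity
    -- RHS ≥ 1/k0
    have hRHS : (1 / (k0 : ℝ)) ≤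
        ∑ k ∈ Finset.Icc 1 (N / 2), (1 / (k : ℝ)) *
          (Set.Ico (2 * π * ((k : ℝ) - 1) / N) (2 * π * k / N)).indicator
            (fun _ => (1 : ℝ)) |x| := by
      have := Finset.single_le_sum hterm_nonneg hmem
      rwa [Set.indicator_of_mem hxmem, mul_one] at this
    refine le_trans ?_ hRHS
    -- LHS ≤ 1/k0
    rcases Nat.eq_or_lt_of_le (show 1 ≤ k0 by omega) with h1 | h2
    · -- k0 = 1
      have h11 : (1 : ℝ) / (k0 : ℝ) = 1 := by rw [← h1]; norm_num
      rw [h11]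
      rcases eq_or_ne (N * Real.sin (x / 2)) 0 with hz | hz
      · rw [hz, div_zero, abs_zero]; norm_num
      · rw [abs_div, div_le_one (abs_pos.2 hz)]
        have := abs_sin_nat_mul_le N (x / 2)
        have he : (N : ℝ) * (x / 2) = N * x / 2 := by ring
        rw [he] at this
        calc |Real.sin (N * x / 2)| ≤ N * |Real.sin (x / 2)| := this
          _ = |(N : ℝ)| * |Real.sin (x / 2)| := by
              rw [abs_of_nonneg hN0.le]
          _ = |(N : ℝ) * Real.sin (x / 2)| := (abs_mul _ _).symm
    · -- k0 ≥ 2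
      have hk02 : (2 : ℝ) ≤ k0 := by exact_mod_cast h2
      -- |sin(x/2)| ≥ |x|/π
      have hhalf : |x / 2| ≤ π / 2 := by
        rw [abs_div, abs_two]
        linarith
      have hsinlb : 2 / π * |x / 2| ≤ |Real.sin (x / 2)| :=
        Real.mul_abs_le_abs_sin hhalf
      have hsinlb' : |x| / π ≤ |Real.sin (x / 2)| := by
        rw [abs_div, abs_two] at hsinlb
        calc |x| / π = 2 / π * (|x| / 2) := by field_simp
          _ ≤ |Real.sin (x / 2)| := hsinlb
      -- N |sin(x/2)| ≥ 2r ≥ 2(k0-1) ≥ k0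
      have hden : (k0 : ℝ) ≤ N * |Real.sin (x / 2)| := by
        have h2r : 2 * r = N * |x| / π := by rw [hr]; field_simp
        have hge : 2 * ((k0 : ℝ) - 1) ≤ 2 * r := by
          have : ((k0 : ℝ) - 1) = ⌊r⌋₊ := by rw [hk0]; push_cast; ring
          rw [this]; linarith
        have : (k0 : ℝ) ≤ 2 * ((k0 : ℝ) - 1) := by linarith
        calc (k0 : ℝ) ≤ 2 * r := by linarith
          _ = N * |x| / π := h2r
          _ = N * (|x| / π) := by ring
          _ ≤ N * |Real.sin (x / 2)| := by
              apply mul_le_mul_of_nonneg_left hsinlb' hN0.le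
      have hdenpos : (0 : ℝ) < N * |Real.sin (x / 2)| := by
        calc (0 : ℝ) < k0 := by positivity
          _ ≤ _ := hden
      rw [abs_div]
      have hden_eq : |(N : ℝ) * Real.sin (x / 2)| = N * |Real.sin (x / 2)| := by
        rw [abs_mul, abs_of_nonneg hN0.le]
      rw [hden_eq]
      calc |Real.sin (N * x / 2)| / (N * |Real.sin (x / 2)|)
          ≤ 1 / (N * |Real.sin (x / 2)|) := by
            gcongr
            exact Real.abs_sin_le_one _
        _ ≤ 1 / (k0 : ℝ) := by
            gcongr
end
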